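/- Let B be a barcode over the finite totally ordered set S = {1 < 2 < ⋯ < n}. Then the number of interacting pairs of bars in B (counted with multiplicity) equals Σ_{1 ≤ i < j ≤ n} (r_{i,j-1} − r_{i,j})·(r_{i+1,j} − r_{i,j}); i.e., the codimension of the isoclass of the equioriented type-A_n quiver representation with barcode B, computed by the classical rank-array formula, equals the number of interacting pairs of bars in B. -/
import Mathlib

/-!
Barcodes over the finite totally ordered set `S = {1 < 2 < ⋯ < n} ⊆ ℕ`.
A bar (nonempty interval) in a finite total order is determined by its
birth (= min) and death (= max), so we record bars by these data.
-/

open scoped Classical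

/-- A bar in `S = {1, …, n}`: a nonempty interval, recorded by its birth
(infimum) and death (supremum), which satisfy `1 ≤ birth ≤ death ≤ n`. -/
structure NatBar (n : ℕ) where
  birth : ℕ
  death : ℕ
  one_le_birth : 1 ≤ birth
  birth_le_death : birth ≤ death
  death_le : death ≤ n

/-- Bars `I, J` (with `b(I) ≤ b(J)`) are interlaced if `b(I) < b(J) ≤ d(I) < d(J)`. -/
def NatBar.Interlaced {n : ℕ} (I J : NatBar n) : Prop :=
  I.birth < J.birth ∧ J.birth ≤ I.death ∧ I.death < J.death

/-- Bars `I, J` are non-separated if `d(I) < b(J)` and no element of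
`S = {1, …, n}` lies strictly between `d(I)` and `b(J)`. -/
def NatBar.NonSep {n : ℕ} (I J : NatBar n) : Prop :=
  I.death < J.birth ∧ ∀ s : ℕ, 1 ≤ s → s ≤ n → ¬ (I.death < s ∧ s < J.birth)

/-- Two bars form an interacting pair if (in one order or the other) they are
interlaced or non-separated. -/
def NatBar.Interacting {n : ℕ} (I J : NatBar n) : Prop :=
  I.Interlaced J ∨ J.Interlaced I ∨ I.NonSep J ∨ J.NonSep I

/-- The persistent Betti numbers of the barcode `B` (a finite multiset of bars,
given as an indexed family `B : Fin N → NatBar n`):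
`r i j = #{bars I of B with b(I) ≤ i and d(I) ≥ j}`, counted with multiplicity. -/
def pBetti {n N : ℕ} (B : Fin N → NatBar n) (i j : ℕ) : ℕ :=
  (Finset.univ.filter fun p => (B p).birth ≤ i ∧ j ≤ (B p).death).card

/-- Auxiliary asymmetric relation: `I` and `J` interact "in this order". -/
def NatBarRel {n : ℕ} (I J : NatBar n) : Prop :=
  I.birth < J.birth ∧ I.death < J.death ∧ J.birth ≤ I.death + 1

lemma natBarRel_iff {n : ℕ} (I J : NatBar n) :
    (I.Interlaced J ∨ I.NonSep J) ↔ NatBarRel I J := by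
  have hbI := I.one_le_birth
  have hbdI := I.birth_le_death
  have hdI := I.death_le
  have hbJ := J.one_le_birth
  have hbdJ := J.birth_le_death
  have hdJ := J.death_le
  constructor
  · rintro (⟨h1, h2, h3⟩ | ⟨h1, h2⟩)
    · exact ⟨h1, h3, le_trans h2 (Nat.le_succ _)⟩
    · have hb : J.birth ≤ I.death + 1 := by
        by_contra hc
        push_neg at hc
        exact h2 (I.death + 1) (by omega) (by omega) (by omega)
      exact ⟨by omega, by omega, hb⟩
  · rintro ⟨h1, h2, h3⟩
    by_cases h : J.birth ≤ I.death
    · exact Or.inl ⟨h1, h, h2⟩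
    · push_neg at h
      exact Or.inr ⟨h, fun s _ _ => by omega⟩

lemma interacting_iff {n : ℕ} (I J : NatBar n) :
    I.Interacting J ↔ NatBarRel I J ∨ NatBarRel J I := by
  unfold NatBar.Interacting
  rw [← natBarRel_iff I J, ← natBarRel_iff J I]
  tauto

lemma sum_swap_out {α : Type*} (s : Finset α) (u : Finset ℕ) (t : ℕ → Finset ℕ)
    (F : ℕ → ℕ → α → ℕ) :
    ∑ i ∈ u, ∑ j ∈ t i, ∑ p ∈ s, F i j p = ∑ p ∈ s, ∑ i ∈ u, ∑ j ∈ t i, F i j p := by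
  calc ∑ i ∈ u, ∑ j ∈ t i, ∑ p ∈ s, F i j p
      = ∑ i ∈ u, ∑ p ∈ s, ∑ j ∈ t i, F i j p :=
        Finset.sum_congr rfl fun i _ => Finset.sum_comm
    _ = ∑ p ∈ s, ∑ i ∈ u, ∑ j ∈ t i, F i j p := Finset.sum_comm

lemma key_pair {n : ℕ} (I J : NatBar n) :
    (∑ i ∈ Finset.Icc 1 n, ∑ j ∈ Finset.Icc (i + 1) n,
      if (I.birth ≤ i ∧ I.death = j - 1) ∧ (J.birth = i + 1 ∧ j ≤ J.death) then 1 else 0)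
      = if NatBarRel I J then 1 else 0 := by
  have hbI := I.one_le_birth
  have hbdI := I.birth_le_death
  have hdI := I.death_le
  have hbJ := J.one_le_birth
  have hbdJ := J.birth_le_death
  have hdJ := J.death_le
  by_cases hrel : NatBarRel I J
  · obtain ⟨h1, h2, h3⟩ := hrel
    rw [if_pos ⟨h1, h2, h3⟩]
    have hstep : ∀ i ∈ Finset.Icc 1 n,
        (∑ j ∈ Finset.Icc (i + 1) n,
          if (I.birth ≤ i ∧ I.death = j - 1) ∧ (J.birth = i + 1 ∧ j ≤ J.death) then 1 else 0)
        = if i = J.birth - 1 then (1 : ℕ) else 0 := by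
      intro i hi
      simp only [Finset.mem_Icc] at hi
      by_cases h : i = J.birth - 1
      · rw [if_pos h]
        have hbody : ∀ j ∈ Finset.Icc (i + 1) n,
            (if (I.birth ≤ i ∧ I.death = j - 1) ∧ (J.birth = i + 1 ∧ j ≤ J.death) then (1 : ℕ) else 0)
            = if j = I.death + 1 then (1 : ℕ) else 0 := by
          intro j hj
          simp only [Finset.mem_Icc] at hj
          exact if_congr (by omega) rfl rfl
        rw [Finset.sum_congr rfl hbody,
          Finset.sum_ite_eq' (Finset.Icc (i + 1) n) (I.death + 1) (fun _ => (1 : ℕ)),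
          if_pos (by simp only [Finset.mem_Icc]; omega)]
      · rw [if_neg h]
        apply Finset.sum_eq_zero
        intro j hj
        simp only [Finset.mem_Icc] at hj
        rw [if_neg]
        rintro ⟨⟨_, _⟩, ⟨hb, _⟩⟩
        omega
    rw [Finset.sum_congr rfl hstep,
      Finset.sum_ite_eq' (Finset.Icc 1 n) (J.birth - 1) (fun _ => (1 : ℕ)),
      if_pos (by simp only [Finset.mem_Icc]; omega)]
  · rw [if_neg hrel]
    apply Finset.sum_eq_zero
    intro i hi
    apply Finset.sum_eq_zero
    intro j hj
    simp only [Finset.mem_Icc] at hi hj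
    rw [if_neg]
    rintro ⟨⟨hA, hB⟩, ⟨hC, hD⟩⟩
    exact hrel ⟨by omega, by omega, by omega⟩

/-- For a barcode `B` over `S = {1 < ⋯ < n}`, the number of
interacting pairs of bars (counted with multiplicity) equals
`Σ_{1 ≤ i < j ≤ n} (r_{i,j-1} − r_{i,j}) · (r_{i+1,j} − r_{i,j})`,
the classical rank-array formula for the codimension of the isoclass of the
corresponding equioriented type-A quiver representation. -/
theorem codim_eq_card_interacting_pairs {n N : ℕ} (B : Fin N → NatBar n) :
    ((Finset.univ : Finset (Fin N × Fin N)).filter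
        (fun pq => pq.1 < pq.2 ∧ (B pq.1).Interacting (B pq.2))).card
      = ∑ i ∈ Finset.Icc 1 n, ∑ j ∈ Finset.Icc (i + 1) n,
          (pBetti B i (j - 1) - pBetti B i j) * (pBetti B (i + 1) j - pBetti B i j) := by
  classical
  -- difference of Betti numbers as counts
  have cardX : ∀ i j : ℕ, 1 ≤ j →
      pBetti B i (j - 1) - pBetti B i j
        = ∑ p : Fin N, (if (B p).birth ≤ i ∧ (B p).death = j - 1 then (1 : ℕ) else 0) := by
    intro i j hj
    have hsplit : (Finset.univ.filter fun p => (B p).birth ≤ i ∧ j - 1 ≤ (B p).death)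
        = (Finset.univ.filter fun p => (B p).birth ≤ i ∧ j ≤ (B p).death)
          ∪ (Finset.univ.filter fun p => (B p).birth ≤ i ∧ (B p).death = j - 1) := by
      ext p
      simp only [Finset.mem_filter, Finset.mem_union, Finset.mem_univ, true_and]
      omega
    have hdisj : Disjoint
        (Finset.univ.filter fun p => (B p).birth ≤ i ∧ j ≤ (B p).death)
        (Finset.univ.filter fun p => (B p).birth ≤ i ∧ (B p).death = j - 1) := by
      rw [Finset.disjoint_left]
      intro p hp hq
      simp only [Finset.mem_filter, Finset.mem_univ, true_and] at hp hq
      omega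
    rw [pBetti, pBetti, hsplit, Finset.card_union_of_disjoint hdisj, ← Finset.card_filter]
    omega
  have cardY : ∀ i j : ℕ,
      pBetti B (i + 1) j - pBetti B i j
        = ∑ q : Fin N, (if (B q).birth = i + 1 ∧ j ≤ (B q).death then (1 : ℕ) else 0) := by
    intro i j
    have hsplit : (Finset.univ.filter fun p => (B p).birth ≤ i + 1 ∧ j ≤ (B p).death)
        = (Finset.univ.filter fun p => (B p).birth ≤ i ∧ j ≤ (B p).death)
          ∪ (Finset.univ.filter fun p => (B p).birth = i + 1 ∧ j ≤ (B p).death) := by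
      ext p
      simp only [Finset.mem_filter, Finset.mem_union, Finset.mem_univ, true_and]
      omega
    have hdisj : Disjoint
        (Finset.univ.filter fun p => (B p).birth ≤ i ∧ j ≤ (B p).death)
        (Finset.univ.filter fun p => (B p).birth = i + 1 ∧ j ≤ (B p).death) := by
      rw [Finset.disjoint_left]
      intro p hp hq
      simp only [Finset.mem_filter, Finset.mem_univ, true_and] at hp hq
      omega
    rw [pBetti, pBetti, hsplit, Finset.card_union_of_disjoint hdisj, ← Finset.card_filter]
    omega
  -- rewrite the RHS as a count of ordered pairs satisfying NatBarRel
  have hRHS : (∑ i ∈ Finset.Icc 1 n, ∑ j ∈ Finset.Icc (i + 1) n,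
          (pBetti B i (j - 1) - pBetti B i j) * (pBetti B (i + 1) j - pBetti B i j))
      = ∑ p : Fin N, ∑ q : Fin N, (if NatBarRel (B p) (B q) then (1 : ℕ) else 0) := by
    calc ∑ i ∈ Finset.Icc 1 n, ∑ j ∈ Finset.Icc (i + 1) n,
          (pBetti B i (j - 1) - pBetti B i j) * (pBetti B (i + 1) j - pBetti B i j)
        = ∑ i ∈ Finset.Icc 1 n, ∑ j ∈ Finset.Icc (i + 1) n,
            ∑ p : Fin N, ∑ q : Fin N,
              (if (B p).birth ≤ i ∧ (B p).death = j - 1 then (1 : ℕ) else 0)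
              * (if (B q).birth = i + 1 ∧ j ≤ (B q).death then (1 : ℕ) else 0) := by
          refine Finset.sum_congr rfl fun i hi => Finset.sum_congr rfl fun j hj => ?_
          simp only [Finset.mem_Icc] at hi hj
          rw [cardX i j (by omega), cardY i j, Finset.sum_mul_sum]
      _ = ∑ p : Fin N, ∑ q : Fin N, ∑ i ∈ Finset.Icc 1 n, ∑ j ∈ Finset.Icc (i + 1) n,
              (if (B p).birth ≤ i ∧ (B p).death = j - 1 then (1 : ℕ) else 0)
              * (if (B q).birth = i + 1 ∧ j ≤ (B q).death then (1 : ℕ) else 0) := by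
          rw [sum_swap_out]
          refine Finset.sum_congr rfl fun p _ => ?_
          rw [sum_swap_out]
      _ = ∑ p : Fin N, ∑ q : Fin N, (if NatBarRel (B p) (B q) then (1 : ℕ) else 0) := by
          refine Finset.sum_congr rfl fun p _ => Finset.sum_congr rfl fun q _ => ?_
          rw [← key_pair (B p) (B q)]
          refine Finset.sum_congr rfl fun i _ => Finset.sum_congr rfl fun j _ => ?_
          by_cases hP : (B p).birth ≤ i ∧ (B p).death = j - 1 <;>
            by_cases hQ : (B q).birth = i + 1 ∧ j ≤ (B q).death <;>
            simp [hP, hQ]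
  rw [hRHS]
  -- rewrite the LHS
  set A1 := Finset.univ.filter
    (fun pq : Fin N × Fin N => pq.1 < pq.2 ∧ NatBarRel (B pq.1) (B pq.2)) with hA1
  set A2 := Finset.univ.filter
    (fun pq : Fin N × Fin N => pq.1 < pq.2 ∧ NatBarRel (B pq.2) (B pq.1)) with hA2
  set A3 := Finset.univ.filter
    (fun pq : Fin N × Fin N => pq.2 < pq.1 ∧ NatBarRel (B pq.1) (B pq.2)) with hA3
  have hL : (Finset.univ.filter
      (fun pq : Fin N × Fin N => pq.1 < pq.2 ∧ (B pq.1).Interacting (B pq.2))) = A1 ∪ A2 := by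
    rw [hA1, hA2]
    ext pq
    simp only [Finset.mem_filter, Finset.mem_union, Finset.mem_univ, true_and,
      interacting_iff]
    tauto
  have hd12 : Disjoint A1 A2 := by
    rw [Finset.disjoint_left]
    intro pq hp hq
    rw [hA1, Finset.mem_filter] at hp
    rw [hA2, Finset.mem_filter] at hq
    obtain ⟨hp1, hp2, hp3⟩ := hp.2.2
    obtain ⟨hq1, hq2, hq3⟩ := hq.2.2
    omega
  have hd13 : Disjoint A1 A3 := by
    rw [Finset.disjoint_left]
    intro pq hp hq
    rw [hA1, Finset.mem_filter] at hp
    rw [hA3, Finset.mem_filter] at hq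
    exact absurd (hp.2.1.trans hq.2.1) (lt_irrefl _)
  have hC : (Finset.univ.filter
      (fun pq : Fin N × Fin N => NatBarRel (B pq.1) (B pq.2))) = A1 ∪ A3 := by
    rw [hA1, hA3]
    ext pq
    simp only [Finset.mem_filter, Finset.mem_union, Finset.mem_univ, true_and]
    constructor
    · intro h
      rcases lt_trichotomy pq.1 pq.2 with h' | h' | h'
      · exact Or.inl ⟨h', h⟩
      · exact absurd h.1 (by rw [h']; exact lt_irrefl _)
      · exact Or.inr ⟨h', h⟩
    · rintro (⟨_, h⟩ | ⟨_, h⟩) <;> exact h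
  have hswap : A2.card = A3.card := by
    apply Finset.card_bij' (fun a _ => a.swap) (fun a _ => a.swap)
    · intro a _; exact Prod.swap_swap a
    · intro a _; exact Prod.swap_swap a
    · intro a ha
      rw [hA2, Finset.mem_filter] at ha
      rw [hA3, Finset.mem_filter]
      exact ⟨Finset.mem_univ _, ha.2.1, ha.2.2⟩
    · intro a ha
      rw [hA3, Finset.mem_filter] at ha
      rw [hA2, Finset.mem_filter]
      exact ⟨Finset.mem_univ _, ha.2.1, ha.2.2⟩
  calc ((Finset.univ : Finset (Fin N × Fin N)).filter
        (fun pq => pq.1 < pq.2 ∧ (B pq.1).Interacting (B pq.2))).card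
      = A1.card + A2.card := by rw [hL, Finset.card_union_of_disjoint hd12]
    _ = A1.card + A3.card := by rw [hswap]
    _ = ((Finset.univ : Finset (Fin N × Fin N)).filter
          (fun pq => NatBarRel (B pq.1) (B pq.2))).card := by
        rw [hC, Finset.card_union_of_disjoint hd13]
    _ = ∑ p : Fin N, ∑ q : Fin N, (if NatBarRel (B p) (B q) then (1 : ℕ) else 0) := by
        rw [Finset.card_filter, ← Finset.univ_product_univ, Finset.sum_product]
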